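/- In the dodecahedron graph, for every 5-cycle C with vertices u₀,…,u₄, pendant neighbours v₀,…,v₄, the strong-neighbourhood subgraph S̃ of S = {u₀,…,u₄,v₀,…,v₄} is isomorphic to the graph X₇: the corona C₅∘K₁ together with five additional vertices v_{i,i+1} (indices mod 5), each adjacent to exactly vᵢ and v_{i+1}. -/

import Mathlib

open scoped Classical

/-- The dodecahedron graph, realized as the generalized Petersen graph $GP(10,2)$. -/
def dodecahedron : SimpleGraph (Fin 2 × Fin 10) :=
  SimpleGraph.fromRel (fun a b =>
    (a.1 = 0 ∧ b.1 = 0 ∧ b.2 = a.2 + 1) ∨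
    (a.1 = 0 ∧ b.1 = 1 ∧ a.2 = b.2) ∨
    (a.1 = 1 ∧ b.1 = 1 ∧ b.2 = a.2 + 2))

/-- The spanning subgraph of `G` consisting of the edges with at least one
endpoint in `S` (the edge set of the subgraph `S̃`). -/
def edgeWithin {V : Type*} (G : SimpleGraph V) (S : Set V) : SimpleGraph V where
  Adj a b := G.Adj a b ∧ (a ∈ S ∨ b ∈ S)
  symm := ⟨fun _ _ h => ⟨h.1.symm, h.2.symm⟩⟩
  loopless := ⟨fun a h => G.loopless.irrefl a h.1⟩

/-- The strong open neighbourhood: vertices outside `S` with at least two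
neighbours inside `S`. -/
def strongNbhd {V : Type*} (G : SimpleGraph V) (S : Set V) : Set V :=
  {w | w ∉ S ∧ ∃ a ∈ S, ∃ b ∈ S, a ≠ b ∧ G.Adj w a ∧ G.Adj w b}

/-- The subgraph `S̃`: vertex set `S ∪ N≥2(S)`, edges of `G` meeting `S`. -/
def sTilde {V : Type*} (G : SimpleGraph V) (S : Set V) :
    SimpleGraph ↥(S ∪ strongNbhd G S) :=
  SimpleGraph.induce (S ∪ strongNbhd G S) (edgeWithin G S)

/-- The graph `X₇`: the corona `C₅ ∘ K₁` (cycle vertices `(i,0)`, pendants `(i,1)`)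
together with five extra vertices `(i,2)`, each adjacent to exactly `(i,1)` and
`(i+1,1)`. -/
def X7 : SimpleGraph (Fin 5 × Fin 3) :=
  SimpleGraph.fromRel (fun a b =>
    (a.2 = 0 ∧ b.2 = 0 ∧ b.1 = a.1 + 1) ∨
    (a.2 = 0 ∧ b.2 = 1 ∧ a.1 = b.1) ∨
    (a.2 = 2 ∧ b.2 = 1 ∧ (b.1 = a.1 ∨ b.1 = a.1 + 1)))

/-! ### Auxiliary machinery -/

instance : DecidableRel dodecahedron.Adj := fun a b =>
  decidable_of_iff _ (SimpleGraph.fromRel_adj _ a b).symm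

instance : DecidableRel X7.Adj := fun a b =>
  decidable_of_iff _ (SimpleGraph.fromRel_adj _ a b).symm

abbrev VV := Fin 2 × Fin 10

/-- Generators of (a subgroup of) the automorphism group of the dodecahedron. -/
def genF : Fin 3 → VV → VV
  | 0, (i, k) => (i, k + 1)
  | 1, (i, k) => (i, -k)
  | 2, p => match p with
  | (0, 0) => (0, 0)
  | (0, 1) => (0, 1)
  | (0, 2) => (1, 1)
  | (0, 3) => (1, 3)
  | (0, 4) => (1, 5)
  | (0, 5) => (0, 5)
  | (0, 6) => (0, 6)
  | (0, 7) => (1, 6)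
  | (0, 8) => (1, 8)
  | (0, 9) => (1, 0)
  | (1, 0) => (0, 9)
  | (1, 1) => (0, 2)
  | (1, 2) => (1, 9)
  | (1, 3) => (0, 3)
  | (1, 4) => (1, 7)
  | (1, 5) => (0, 4)
  | (1, 6) => (0, 7)
  | (1, 7) => (1, 4)
  | (1, 8) => (0, 8)
  | (1, 9) => (1, 2)
def genInv : Fin 3 → VV → VV
  | 0, (i, k) => (i, k - 1)
  | g, p => genF g p

lemma gen_left_inv : ∀ (g : Fin 3) (x : VV), genInv g (genF g x) = x := by decide

lemma gen_right_inv : ∀ (g : Fin 3) (x : VV), genF g (genInv g x) = x := by decide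

lemma gen_adj : ∀ (g : Fin 3) (a b : VV),
    dodecahedron.Adj (genF g a) (genF g b) ↔ dodecahedron.Adj a b := by decide

def genE (g : Fin 3) : VV ≃ VV where
  toFun := genF g
  invFun := genInv g
  left_inv x := gen_left_inv g x
  right_inv x := gen_right_inv g x

/-- Apply a word in the generators. -/
def aw : List (Fin 3) → VV → VV
  | [], x => x
  | g :: w, x => aw w (genF g x)

def awE : List (Fin 3) → VV ≃ VV
  | [] => Equiv.refl VV
  | g :: w => (genE g).trans (awE w)

lemma awE_coe : ∀ (w : List (Fin 3)) (x : VV), awE w x = aw w x := by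
  intro w
  induction w with
  | nil => intro x; rfl
  | cons g w' ih =>
      intro x
      show awE w' (genE g x) = aw w' (genF g x)
      exact ih (genF g x)

lemma awE_adj : ∀ (w : List (Fin 3)) (a b : VV),
    dodecahedron.Adj (awE w a) (awE w b) ↔ dodecahedron.Adj a b := by
  intro w
  induction w with
  | nil => intro a b; exact Iff.rfl
  | cons g w' ih =>
      intro a b
      show dodecahedron.Adj (awE w' (genE g a)) (awE w' (genE g b)) ↔ _
      rw [ih (genE g a) (genE g b)]
      exact gen_adj g a b

/-- The canonical labelling of the 15 vertices of `S̃` for the canonical 5-cycle. -/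
def fcan : Fin 5 × Fin 3 → VV
  | (0, 0) => (1, 0)
  | (1, 0) => (1, 2)
  | (2, 0) => (1, 4)
  | (3, 0) => (1, 6)
  | (4, 0) => (1, 8)
  | (0, 1) => (0, 0)
  | (1, 1) => (0, 2)
  | (2, 1) => (0, 4)
  | (3, 1) => (0, 6)
  | (4, 1) => (0, 8)
  | (0, 2) => (0, 1)
  | (1, 2) => (0, 3)
  | (2, 2) => (0, 5)
  | (3, 2) => (0, 7)
  | (4, 2) => (0, 9)

/-- Partial inverse of `fcan`. -/
def gcan : VV → Fin 5 × Fin 3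
  | (1, 0) => (0, 0)
  | (1, 2) => (1, 0)
  | (1, 4) => (2, 0)
  | (1, 6) => (3, 0)
  | (1, 8) => (4, 0)
  | (0, 0) => (0, 1)
  | (0, 2) => (1, 1)
  | (0, 4) => (2, 1)
  | (0, 6) => (3, 1)
  | (0, 8) => (4, 1)
  | (0, 1) => (0, 2)
  | (0, 3) => (1, 2)
  | (0, 5) => (2, 2)
  | (0, 7) => (3, 2)
  | (0, 9) => (4, 2)
  | _ => (0, 0)

def ucan : Fin 5 → VV := fun i => fcan (i, 0)
def vcan : Fin 5 → VV := fun i => fcan (i, 1)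

def ws : List (List (Fin 3)) := [[], [0], [0, 0], [0, 0, 0], [0, 0, 0, 0], [0, 0, 0, 0, 0], [0, 0, 0, 0, 0, 0], [0, 0, 0, 0, 0, 0, 2], [0, 0, 0, 0, 0, 1], [0, 0, 0, 0, 0, 1, 2], [0, 0, 0, 0, 0, 2], [0, 0, 0, 0, 0, 2, 0], [0, 0, 0, 0, 0, 2, 1], [0, 0, 0, 0, 1], [0, 0, 0, 0, 1, 2], [0, 0, 0, 0, 2], [0, 0, 0, 0, 2, 0], [0, 0, 0, 0, 2, 0, 0], [0, 0, 0, 0, 2, 0, 1], [0, 0, 0, 0, 2, 1], [0, 0, 0, 1], [0, 0, 0, 1, 2], [0, 0, 0, 1, 2, 0], [0, 0, 0, 1, 2, 1], [0, 0, 0, 2], [0, 0, 0, 2, 0], [0, 0, 0, 2, 0, 0], [0, 0, 0, 2, 0, 0, 0], [0, 0, 0, 2, 0, 0, 1], [0, 0, 0, 2, 0, 1], [0, 0, 0, 2, 1], [0, 0, 1], [0, 0, 1, 2], [0, 0, 1, 2, 0], [0, 0, 1, 2, 1], [0, 0, 2], [0, 0, 2, 0], [0, 0, 2, 0, 0], [0,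 0, 2, 0, 0, 0], [0, 0, 2, 0, 0, 0, 0], [0, 0, 2, 0, 0, 0, 1], [0, 0, 2, 0, 0, 1], [0, 0, 2, 0, 1], [0, 0, 2, 1], [0, 1], [0, 1, 2], [0, 1, 2, 0], [0, 1, 2, 0, 0], [0, 1, 2, 0, 0, 0], [0, 1, 2, 0, 0, 0, 0], [0, 1, 2, 0, 0, 0, 1], [0, 1, 2, 0, 0, 1], [0, 1, 2, 0, 0, 2], [0, 1, 2, 0, 1], [0, 1, 2, 0, 1, 2], [0, 1, 2, 1], [0, 2], [0, 2, 0], [0, 2, 0, 0], [0, 2, 0, 0, 0], [0, 2, 0, 0, 0, 0], [0, 2, 0, 0, 0, 1], [0, 2, 0, 0, 1], [0, 2, 0, 0, 2], [0, 2, 0, 1], [0, 2, 0, 1, 2], [0, 2, 1], [1], [1, 0], [1, 0, 0], [1, 0, 0, 0], [1, 0, 0, 0, 0], [1, 0, 0, 0, 0, 2], [1, 0, 0, 0, 1], [1, 0, 0, 0, 1, 2], [1, 0, 0, 0, 2], [1, 0, 0, 0, 2, 0], [1, 0, 0, 0, 2, 1], [1, 0, 0, 1], [1, 0, 0, 1,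 2], [1, 0, 0, 1, 2, 0], [1, 0, 0, 1, 2, 1], [1, 0, 0, 2], [1, 0, 0, 2, 0], [1, 0, 0, 2, 0, 0], [1, 0, 0, 2, 0, 1], [1, 0, 0, 2, 1], [1, 0, 1], [1, 0, 1, 2], [1, 0, 1, 2, 0], [1, 0, 1, 2, 1], [1, 0, 2], [1, 0, 2, 0], [1, 0, 2, 0, 0], [1, 0, 2, 0, 0, 0], [1, 0, 2, 0, 0, 1], [1, 0, 2, 0, 1], [1, 0, 2, 1], [1, 2], [1, 2, 0], [1, 2, 0, 0], [1, 2, 0, 0, 0], [1, 2, 0, 0, 0, 0], [1, 2, 0, 0, 0, 1], [1, 2, 0, 0, 1], [1, 2, 0, 0, 2], [1, 2, 0, 1], [1, 2, 0, 1, 2], [1, 2, 1], [2], [2, 0], [2, 0, 0], [2, 0, 0, 0], [2, 0, 0, 0, 0], [2, 0, 0, 0, 1], [2, 0, 0, 1], [2, 0, 0, 2], [2, 0, 1], [2, 0, 1, 2], [2, 1]]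

set_option synthInstance.maxSize 1000 in
set_option maxRecDepth 10000 in
set_option maxHeartbeats 1000000 in
lemma cycle_classify : ∀ a b : VV, dodecahedron.Adj a b →
    ∀ c, dodecahedron.Adj b c → a ≠ c →
    ∀ d, dodecahedron.Adj c d → a ≠ d → b ≠ d →
    ∀ e, dodecahedron.Adj d e → dodecahedron.Adj e a → b ≠ e → c ≠ e →
    ∃ w ∈ ws, aw w a = (1, 0) ∧ aw w b = (1, 2) ∧ aw w c = (1, 4) ∧
      aw w d = (1, 6) ∧ aw w e = (1, 8) := by decide

lemma pendant_forced : ∀ (i : Fin 5) (x : VV), dodecahedron.Adj (ucan i) x →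
    (∀ j : Fin 5, x ≠ ucan j) → x = vcan i := by decide
/-! ### Transport of `sTilde` along automorphisms -/

lemma strongNbhd_map {W : Type*} (G : SimpleGraph W) (e : W ≃ W)
    (he : ∀ a b, G.Adj (e a) (e b) ↔ G.Adj a b) (S : Set W) {x : W}
    (hx : x ∈ strongNbhd G S) : e x ∈ strongNbhd G (e '' S) := by
  obtain ⟨hxS, a, ha, b, hb, hab, hxa, hxb⟩ := hx
  refine ⟨fun h => hxS ?_, e a, ⟨a, ha, rfl⟩, e b, ⟨b, hb, rfl⟩,
    fun h => hab (e.injective h), (he _ _).mpr hxa, (he _ _).mpr hxb⟩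
  rwa [e.injective.mem_set_image] at h

lemma sTilde_iso {W : Type*} (G : SimpleGraph W) (e : W ≃ W)
    (he : ∀ a b, G.Adj (e a) (e b) ↔ G.Adj a b) (S S' : Set W)
    (hS : e '' S = S') : Nonempty (sTilde G S ≃g sTilde G S') := by
  subst hS
  have he' : ∀ a b, G.Adj (e.symm a) (e.symm b) ↔ G.Adj a b := by
    intro a b
    conv_rhs => rw [← e.apply_symm_apply a, ← e.apply_symm_apply b]
    exact (he _ _).symm
  have hfwd : ∀ x : W, x ∈ S ∪ strongNbhd G S →
      e x ∈ (e '' S) ∪ strongNbhd G (e '' S) := by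
    rintro x (hx | hx)
    · exact Or.inl ⟨x, hx, rfl⟩
    · exact Or.inr (strongNbhd_map G e he S hx)
  have hbwd : ∀ y : W, y ∈ (e '' S) ∪ strongNbhd G (e '' S) →
      e.symm y ∈ S ∪ strongNbhd G S := by
    rintro y (hy | hy)
    · obtain ⟨x, hx, rfl⟩ := hy
      simpa using Or.inl hx
    · have h3 := strongNbhd_map G e.symm he' (e '' S) hy
      rw [Equiv.symm_image_image] at h3
      exact Or.inr h3
  refine ⟨⟨⟨fun x => ⟨e x, hfwd x x.2⟩, fun y => ⟨e.symm y, hbwd y y.2⟩,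
    fun x => ?_, fun y => ?_⟩, @fun a b => ?_⟩⟩
  · ext; exact e.symm_apply_apply _
  · ext; exact e.apply_symm_apply _
  · show (edgeWithin G (e '' S)).Adj (e a) (e b) ↔ (edgeWithin G S).Adj a b
    show (G.Adj (e a) (e b) ∧ _) ↔ (G.Adj ↑a ↑b ∧ _)
    rw [he, e.injective.mem_set_image, e.injective.mem_set_image]

/-! ### The canonical case -/

def Scan : Set VV := Set.range ucan ∪ Set.range vcan

lemma hmem : ∀ x : VV, x ∈ Scan ∪ strongNbhd dodecahedron Scan ↔
    ∃ p : Fin 5 × Fin 3, fcan p = x := by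
  intro x
  simp only [Scan, strongNbhd, Set.mem_union, Set.mem_setOf_eq, Set.mem_range,
    not_or, not_exists]
  revert x
  decide

lemma gcan_fcan : ∀ p : Fin 5 × Fin 3, gcan (fcan p) = p := by decide

def ecan : (Fin 5 × Fin 3) ≃ ↥(Scan ∪ strongNbhd dodecahedron Scan) where
  toFun p := ⟨fcan p, (hmem _).mpr ⟨p, rfl⟩⟩
  invFun y := gcan y.1
  left_inv p := gcan_fcan p
  right_inv y := by
    obtain ⟨p, hp⟩ := (hmem y.1).mp y.2
    apply Subtype.ext
    show fcan (gcan y.1) = y.1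
    rw [← hp, gcan_fcan]

lemma adj_can : ∀ p q : Fin 5 × Fin 3,
    (dodecahedron.Adj (fcan p) (fcan q) ∧ (fcan p ∈ Scan ∨ fcan q ∈ Scan)) ↔
      X7.Adj p q := by
  simp only [Scan, Set.mem_union, Set.mem_range]
  decide

noncomputable def isoCan : X7 ≃g sTilde dodecahedron Scan where
  toEquiv := ecan
  map_rel_iff' := @fun p q => by
    show (edgeWithin dodecahedron Scan).Adj (fcan p) (fcan q) ↔ X7.Adj p q
    show (dodecahedron.Adj (fcan p) (fcan q) ∧ _) ↔ X7.Adj p q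
    exact adj_can p q

open scoped Classical

theorem stmt_17 (u v : Fin 5 → Fin 2 × Fin 10)
    (hu : Function.Injective u)
    (hc : ∀ i, dodecahedron.Adj (u i) (u (i + 1)))
    (hv : ∀ i, dodecahedron.Adj (u i) (v i)) (hvu : ∀ i j, v i ≠ u j) :
    Nonempty (sTilde dodecahedron (Set.range u ∪ Set.range v) ≃g X7) := by
  have hne : ∀ i j : Fin 5, i ≠ j → u i ≠ u j := fun i j hij h => hij (hu h)
  have h40 : dodecahedron.Adj (u 4) (u 0) := by
    have h := hc 4; rwa [show (4 : Fin 5) + 1 = 0 from rfl] at h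
  obtain ⟨w, -, h0, h1, h2, h3, h4⟩ :=
    cycle_classify (u 0) (u 1) (hc 0) (u 2) (hc 1) (hne 0 2 (by decide))
      (u 3) (hc 2) (hne 0 3 (by decide)) (hne 1 3 (by decide))
      (u 4) (hc 3) h40 (hne 1 4 (by decide)) (hne 2 4 (by decide))
  have hφu : ∀ i : Fin 5, awE w (u i) = ucan i := by
    intro i
    fin_cases i
    · exact (awE_coe w (u 0)).trans h0
    · exact (awE_coe w (u 1)).trans h1
    · exact (awE_coe w (u 2)).trans h2
    · exact (awE_coe w (u 3)).trans h3
    · exact (awE_coe w (u 4)).trans h4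
  have hφv : ∀ i : Fin 5, awE w (v i) = vcan i := by
    intro i
    apply pendant_forced i
    · rw [← hφu i]
      exact (awE_adj w _ _).mpr (hv i)
    · intro j h
      exact hvu i j ((awE w).injective (h.trans (hφu j).symm))
  have himg : awE w '' (Set.range u ∪ Set.range v) = Scan := by
    rw [Set.image_union, ← Set.range_comp, ← Set.range_comp]
    have : (awE w) ∘ u = ucan := funext hφu
    have h2 : (awE w) ∘ v = vcan := funext hφv
    rw [this, h2]; rfl
  obtain ⟨iso1⟩ := sTilde_iso dodecahedron (awE w) (awE_adj w)
    (Set.range u ∪ Set.range v) Scan himg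
  exact ⟨iso1.trans isoCan.symm⟩
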